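/- (Factorization lemma for the factored objective.) In a finite Dec-POMDP with hierarchical agent models, let N = (π_i, Tx_i)_{i=1..n} and N' = (π_i', Tx_i')_{i=1..n} be two joint agent models with AMM-occupancy measures ρ_i and ρ_i' respectively (each agent's occupancy measure induced by its own model together with the remaining models from the same joint model). Define for each agent i the π-occupancy measure ρ_i(o,a,x) := ∑_{x⁻} ρ_i(o,a,x,x⁻) and the Tx-occupancy measure ρ_i(o,x,x⁻) := ∑_a ρ_i(o,a,x,x⁻), and similarly for ρ_i'. Assume the marginals ρ_i(o,x⁻), ρ_i(o,x), ρ_i'(o,x⁻), ρ_i'(o,x) are strictly positive for all agents i and all arguments. Then the following are equivalent: (1) ρ_i(o,a,x) = ρ_i'(o,a,x) and ρ_i(o,x,x⁻) = ρ_i'(o,x,x⁻) for all i and all arguments; (2) ρ_i(o,a,x,x⁻) = ρ_i'(o,a,x,x⁻) for all i and all arguments. Moreover, under either condition, π_i = π_i' and Tx_i = Tx_i' for all i. -/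
import Mathlib


open scoped BigOperators
open Classical

section DecPOMDP

variable {n : ℕ} {S : Type} {A : Fin n → Type} {Ω : Fin n → Type} {X : Fin n → Type}

/-- The time-`t` joint distribution of the Dec-POMDP process with hierarchical agent
models, over tuples `(s^t, o^t, x^{t-1}, x^t, a^t)`; here `x^{-1} := #` is modelled by
`none`, as is the absent previous joint action at time `0`. The process is:
`s⁰ ~ μ0`, `o_i⁰ = O_i(s⁰,#)`, `x_i⁰ ~ Tx_i(·|o_i⁰,#)`, `a_i⁰ ~ π_i(·|o_i⁰,x_i⁰)`;
and for `t ≥ 0`, `s^{t+1} ~ T(·|s^t,a^t)`, `o_i^{t+1} = O_i(s^{t+1},a^t)`,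
`x_i^{t+1} ~ Tx_i(·|o_i^{t+1},x_i^t)`, `a_i^{t+1} ~ π_i(·|o_i^{t+1},x_i^{t+1})`,
independently across agents. -/
noncomputable def jointDist [Fintype S] [∀ i, Fintype (A i)] [∀ i, Fintype (Ω i)]
    [∀ i, Fintype (X i)]
    (T : S → (∀ i, A i) → S → ℝ) (μ0 : S → ℝ)
    (Obs : ∀ i, S → Option (∀ j, A j) → Ω i)
    (π : ∀ i, Ω i → X i → A i → ℝ)
    (Tx : ∀ i, Ω i → Option (X i) → X i → ℝ) :
    ℕ → S → (∀ i, Ω i) → (∀ i, Option (X i)) → (∀ i, X i) → (∀ i, A i) → ℝ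
  | 0, s, o, xp, x, a =>
      (μ0 s *
        (if (∀ i, o i = Obs i s none) ∧ xp = (fun _ => none) then (1 : ℝ) else 0)) *
      ((∏ i, Tx i (o i) (xp i) (x i)) * ∏ i, π i (o i) (x i) (a i))
  | (t + 1), s', o', xp', x', a' =>
      (∑ s : S, ∑ o : (∀ i, Ω i), ∑ xp : (∀ i, Option (X i)), ∑ x : (∀ i, X i),
        ∑ a : (∀ i, A i),
          jointDist T μ0 Obs π Tx t s o xp x a * T s a s' *
            (if (∀ i, o' i = Obs i s' (some a)) ∧ xp' = (fun i => some (x i))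
              then (1 : ℝ) else 0)) *
      ((∏ i, Tx i (o' i) (xp' i) (x' i)) * ∏ i, π i (o' i) (x' i) (a' i))

/-- The AMM-occupancy measure of agent `i`:
`ρ_i(o,a,x,x⁻) := ∑_{t=0}^∞ γ^t · P(o_i^t = o, a_i^t = a, x_i^t = x, x_i^{t-1} = x⁻)`,
with the convention `x_i^{-1} := #` (modelled by `none`). -/
noncomputable def occAMM [Fintype S] [∀ i, Fintype (A i)] [∀ i, Fintype (Ω i)]
    [∀ i, Fintype (X i)]
    (T : S → (∀ i, A i) → S → ℝ) (μ0 : S → ℝ)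
    (Obs : ∀ i, S → Option (∀ j, A j) → Ω i) (γ : ℝ)
    (π : ∀ i, Ω i → X i → A i → ℝ)
    (Tx : ∀ i, Ω i → Option (X i) → X i → ℝ)
    (i : Fin n) (o : Ω i) (a : A i) (x : X i) (xp : Option (X i)) : ℝ :=
  ∑' t : ℕ,
    γ ^ t *
      (∑ s : S, ∑ oj : (∀ j, Ω j), ∑ xpj : (∀ j, Option (X j)), ∑ xj : (∀ j, X j),
        ∑ aj : (∀ j, A j),
          if oj i = o ∧ aj i = a ∧ xj i = x ∧ xpj i = xp
            then jointDist T μ0 Obs π Tx t s oj xpj xj aj else 0)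



/-- Auxiliary: summing a product over a Pi type with one coordinate pinned. -/
lemma sum_pi_ite {ι : Type} [Fintype ι] [DecidableEq ι] {Y : ι → Type} [∀ j, Fintype (Y j)]
    (f : ∀ j, Y j → ℝ) (h1 : ∀ j, ∑ y, f j y = 1) (i : ι) (x : Y i) :
    ∑ g : ∀ j, Y j, (if g i = x then ∏ j, f j (g j) else 0) = f i x := by
  set F : ∀ j, Y j → ℝ := Function.update f i (fun y => if y = x then f i y else 0) with hF
  have key : ∀ g : ∀ j, Y j, (if g i = x then ∏ j, f j (g j) else 0) = ∏ j, F j (g j) := by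
    intro g
    conv_rhs => rw [← Finset.mul_prod_erase _ _ (Finset.mem_univ i)]
    have hFi : F i (g i) = if g i = x then f i (g i) else 0 := by
      rw [hF, Function.update_self]
    have hrest : ∏ j ∈ Finset.univ.erase i, F j (g j)
        = ∏ j ∈ Finset.univ.erase i, f j (g j) := by
      apply Finset.prod_congr rfl; intro j hj
      rw [hF, Function.update_of_ne (Finset.ne_of_mem_erase hj)]
    rw [hFi, hrest]
    by_cases hg : g i = x
    · rw [if_pos hg, if_pos hg, ← Finset.mul_prod_erase _ _ (Finset.mem_univ i)]
    · rw [if_neg hg, if_neg hg, zero_mul]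
  calc ∑ g : ∀ j, Y j, (if g i = x then ∏ j, f j (g j) else 0)
      = ∑ g : ∀ j, Y j, ∏ j, F j (g j) := Finset.sum_congr rfl fun g _ => key g
    _ = ∏ j, ∑ y, F j y := by
        rw [← Fintype.piFinset_univ, ← Finset.prod_univ_sum]
    _ = f i x := by
        rw [Finset.prod_eq_single i]
        · rw [hF, Function.update_self]
          simpa using Finset.sum_ite_eq' Finset.univ x (f i)
        · intro j _ hj
          rw [hF, Function.update_of_ne hj]; exact h1 j
        · intro h; exact absurd (Finset.mem_univ i) h

/-- The part of `jointDist` not depending on the current subtasks and actions. -/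
noncomputable def base [Fintype S] [∀ i, Fintype (A i)] [∀ i, Fintype (Ω i)]
    [∀ i, Fintype (X i)]
    (T : S → (∀ i, A i) → S → ℝ) (μ0 : S → ℝ)
    (Obs : ∀ i, S → Option (∀ j, A j) → Ω i)
    (π : ∀ i, Ω i → X i → A i → ℝ)
    (Tx : ∀ i, Ω i → Option (X i) → X i → ℝ) :
    ℕ → S → (∀ i, Ω i) → (∀ i, Option (X i)) → ℝ
  | 0, s, o, xp =>
      μ0 s *
        (if (∀ i, o i = Obs i s none) ∧ xp = (fun _ => none) then (1 : ℝ) else 0)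
  | (t + 1), s', o', xp' =>
      ∑ s : S, ∑ o : (∀ i, Ω i), ∑ xp : (∀ i, Option (X i)), ∑ x : (∀ i, X i),
        ∑ a : (∀ i, A i),
          jointDist T μ0 Obs π Tx t s o xp x a * T s a s' *
            (if (∀ i, o' i = Obs i s' (some a)) ∧ xp' = (fun i => some (x i))
              then (1 : ℝ) else 0)

lemma jointDist_eq_base [Fintype S] [∀ i, Fintype (A i)] [∀ i, Fintype (Ω i)]
    [∀ i, Fintype (X i)]
    (T : S → (∀ i, A i) → S → ℝ) (μ0 : S → ℝ)
    (Obs : ∀ i, S → Option (∀ j, A j) → Ω i)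
    (π : ∀ i, Ω i → X i → A i → ℝ)
    (Tx : ∀ i, Ω i → Option (X i) → X i → ℝ)
    (t : ℕ) (s : S) (o : ∀ i, Ω i) (xp : ∀ i, Option (X i)) (x : ∀ i, X i) (a : ∀ i, A i) :
    jointDist T μ0 Obs π Tx t s o xp x a
      = base T μ0 Obs π Tx t s o xp *
          ((∏ i, Tx i (o i) (xp i) (x i)) * ∏ i, π i (o i) (x i) (a i)) := by
  cases t <;> rfl

/-- The discounted occupancy of `(o, x⁻)` pairs for agent `i`. -/
noncomputable def wgt [Fintype S] [∀ i, Fintype (A i)] [∀ i, Fintype (Ω i)]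
    [∀ i, Fintype (X i)]
    (T : S → (∀ i, A i) → S → ℝ) (μ0 : S → ℝ)
    (Obs : ∀ i, S → Option (∀ j, A j) → Ω i) (γ : ℝ)
    (π : ∀ i, Ω i → X i → A i → ℝ)
    (Tx : ∀ i, Ω i → Option (X i) → X i → ℝ)
    (i : Fin n) (o : Ω i) (xp : Option (X i)) : ℝ :=
  ∑' t : ℕ, γ ^ t *
    (∑ s : S, ∑ oj : (∀ j, Ω j), ∑ xpj : (∀ j, Option (X j)),
      if oj i = o ∧ xpj i = xp then base T μ0 Obs π Tx t s oj xpj else 0)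

/-- Factorization of the AMM-occupancy measure. -/
lemma occ_factor [Fintype S] [∀ i, Fintype (A i)] [∀ i, Fintype (Ω i)]
    [∀ i, Fintype (X i)]
    (T : S → (∀ i, A i) → S → ℝ) (μ0 : S → ℝ)
    (Obs : ∀ i, S → Option (∀ j, A j) → Ω i) (γ : ℝ)
    (π : ∀ i, Ω i → X i → A i → ℝ)
    (Tx : ∀ i, Ω i → Option (X i) → X i → ℝ)
    (hπ_sum : ∀ i o x, ∑ a : A i, π i o x a = 1)
    (hTx_sum : ∀ i o xp, ∑ x : X i, Tx i o xp x = 1)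
    (i : Fin n) (o : Ω i) (a : A i) (x : X i) (xp : Option (X i)) :
    occAMM T μ0 Obs γ π Tx i o a x xp
      = π i o x a * Tx i o xp x * wgt T μ0 Obs γ π Tx i o xp := by
  have hS5 : ∀ t : ℕ,
      (∑ s : S, ∑ oj : (∀ j, Ω j), ∑ xpj : (∀ j, Option (X j)), ∑ xj : (∀ j, X j),
        ∑ aj : (∀ j, A j),
          if oj i = o ∧ aj i = a ∧ xj i = x ∧ xpj i = xp
            then jointDist T μ0 Obs π Tx t s oj xpj xj aj else 0)
      = (∑ s : S, ∑ oj : (∀ j, Ω j), ∑ xpj : (∀ j, Option (X j)),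
          if oj i = o ∧ xpj i = xp then base T μ0 Obs π Tx t s oj xpj else 0)
          * (π i o x a * Tx i o xp x) := by
    intro t
    rw [Finset.sum_mul]
    refine Finset.sum_congr rfl fun s _ => ?_
    rw [Finset.sum_mul]
    refine Finset.sum_congr rfl fun oj _ => ?_
    rw [Finset.sum_mul]
    refine Finset.sum_congr rfl fun xpj _ => ?_
    by_cases hc : oj i = o ∧ xpj i = xp
    · obtain ⟨ho, hxp⟩ := hc
      rw [if_pos ⟨ho, hxp⟩]
      have step1 : ∀ xj : ∀ j, X j,
          (∑ aj : (∀ j, A j),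
            if oj i = o ∧ aj i = a ∧ xj i = x ∧ xpj i = xp
              then jointDist T μ0 Obs π Tx t s oj xpj xj aj else 0)
          = (if xj i = x then (∏ j, Tx j (oj j) (xpj j) (xj j)) else 0) *
              (base T μ0 Obs π Tx t s oj xpj * π i o x a) := by
        intro xj
        by_cases hx : xj i = x
        · have hterm : ∀ aj : ∀ j, A j,
              (if oj i = o ∧ aj i = a ∧ xj i = x ∧ xpj i = xp
                then jointDist T μ0 Obs π Tx t s oj xpj xj aj else 0)
              = (base T μ0 Obs π Tx t s oj xpj * ∏ j, Tx j (oj j) (xpj j) (xj j)) *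
                  (if aj i = a then ∏ j, π j (oj j) (xj j) (aj j) else 0) := by
            intro aj
            by_cases ha : aj i = a
            · rw [if_pos ⟨ho, ha, hx, hxp⟩, if_pos ha, jointDist_eq_base]; ring
            · rw [if_neg (by tauto), if_neg ha, mul_zero]
          rw [Finset.sum_congr rfl fun aj _ => hterm aj, ← Finset.mul_sum,
            sum_pi_ite (fun j => π j (oj j) (xj j)) (fun j => hπ_sum j _ _) i a,
            if_pos hx, hx, ho]
          ring
        · rw [if_neg hx, zero_mul]
          apply Finset.sum_eq_zero; intro aj _
          exact if_neg (by tauto)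
      rw [Finset.sum_congr rfl fun xj _ => step1 xj, ← Finset.sum_mul,
        sum_pi_ite (fun j => Tx j (oj j) (xpj j)) (fun j => hTx_sum j _ _) i x, ho, hxp]
      ring
    · rw [if_neg hc, zero_mul]
      apply Finset.sum_eq_zero; intro xj _
      apply Finset.sum_eq_zero; intro aj _
      exact if_neg (fun h => hc ⟨h.1, h.2.2.2⟩)
  unfold occAMM wgt
  calc (∑' t : ℕ, γ ^ t *
        (∑ s : S, ∑ oj : (∀ j, Ω j), ∑ xpj : (∀ j, Option (X j)), ∑ xj : (∀ j, X j),
          ∑ aj : (∀ j, A j),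
            if oj i = o ∧ aj i = a ∧ xj i = x ∧ xpj i = xp
              then jointDist T μ0 Obs π Tx t s oj xpj xj aj else 0))
      = ∑' t : ℕ, (π i o x a * Tx i o xp x) *
          (γ ^ t * (∑ s : S, ∑ oj : (∀ j, Ω j), ∑ xpj : (∀ j, Option (X j)),
            if oj i = o ∧ xpj i = xp then base T μ0 Obs π Tx t s oj xpj else 0)) := by
        refine tsum_congr fun t => ?_
        rw [hS5 t]; ring
    _ = π i o x a * Tx i o xp x * ∑' t : ℕ, γ ^ t *
          (∑ s : S, ∑ oj : (∀ j, Ω j), ∑ xpj : (∀ j, Option (X j)),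
            if oj i = o ∧ xpj i = xp then base T μ0 Obs π Tx t s oj xpj else 0) :=
        tsum_mul_left


/-- **factorization lemma for the factored objective.** Let
`N = (π_i, Tx_i)` and `N' = (π_i', Tx_i')` be two joint agent models with AMM-occupancy
measures `ρ_i` and `ρ_i'`, and assume all marginals `ρ_i(o,x⁻)`, `ρ_i(o,x)`,
`ρ_i'(o,x⁻)`, `ρ_i'(o,x)` are strictly positive. Then the π-occupancy measures
`ρ_i(o,a,x) = ∑_{x⁻} ρ_i(o,a,x,x⁻)` and Tx-occupancy measures
`ρ_i(o,x,x⁻) = ∑_a ρ_i(o,a,x,x⁻)` of the two models agree (for all agents) if and only if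
the full AMM-occupancy measures agree; and under either condition `π_i = π_i'` and
`Tx_i = Tx_i'` for all `i`. -/
theorem occAMM_factored_matching
    {n : ℕ} {S : Type} {A : Fin n → Type} {Ω : Fin n → Type} {X : Fin n → Type}
    [Fintype S] [Nonempty S]
    [∀ i, Fintype (A i)] [∀ i, Nonempty (A i)]
    [∀ i, Fintype (Ω i)] [∀ i, Nonempty (Ω i)]
    [∀ i, Fintype (X i)] [∀ i, Nonempty (X i)]
    (T : S → (∀ i, A i) → S → ℝ) (μ0 : S → ℝ)
    (Obs : ∀ i, S → Option (∀ j, A j) → Ω i) (γ : ℝ)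
    (π π' : ∀ i, Ω i → X i → A i → ℝ)
    (Tx Tx' : ∀ i, Ω i → Option (X i) → X i → ℝ)
    (hT_nonneg : ∀ s a s', 0 ≤ T s a s') (hT_sum : ∀ s a, ∑ s' : S, T s a s' = 1)
    (hμ0_nonneg : ∀ s, 0 ≤ μ0 s) (hμ0_sum : ∑ s : S, μ0 s = 1)
    (hγ0 : 0 < γ) (hγ1 : γ < 1)
    (hπ_nonneg : ∀ i o x a, 0 ≤ π i o x a)
    (hπ_sum : ∀ i o x, ∑ a : A i, π i o x a = 1)
    (hTx_nonneg : ∀ i o xp x, 0 ≤ Tx i o xp x)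
    (hTx_sum : ∀ i o xp, ∑ x : X i, Tx i o xp x = 1)
    (hπ'_nonneg : ∀ i o x a, 0 ≤ π' i o x a)
    (hπ'_sum : ∀ i o x, ∑ a : A i, π' i o x a = 1)
    (hTx'_nonneg : ∀ i o xp x, 0 ≤ Tx' i o xp x)
    (hTx'_sum : ∀ i o xp, ∑ x : X i, Tx' i o xp x = 1)
    (hpos_oxp : ∀ (i : Fin n) (o : Ω i) (xp : Option (X i)),
      0 < ∑ a : A i, ∑ x : X i, occAMM T μ0 Obs γ π Tx i o a x xp)
    (hpos_ox : ∀ (i : Fin n) (o : Ω i) (x : X i),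
      0 < ∑ a : A i, ∑ xp : Option (X i), occAMM T μ0 Obs γ π Tx i o a x xp)
    (hpos'_oxp : ∀ (i : Fin n) (o : Ω i) (xp : Option (X i)),
      0 < ∑ a : A i, ∑ x : X i, occAMM T μ0 Obs γ π' Tx' i o a x xp)
    (hpos'_ox : ∀ (i : Fin n) (o : Ω i) (x : X i),
      0 < ∑ a : A i, ∑ xp : Option (X i), occAMM T μ0 Obs γ π' Tx' i o a x xp) :
    (((∀ (i : Fin n) (o : Ω i) (a : A i) (x : X i),
        (∑ xp : Option (X i), occAMM T μ0 Obs γ π Tx i o a x xp)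
          = ∑ xp : Option (X i), occAMM T μ0 Obs γ π' Tx' i o a x xp) ∧
      (∀ (i : Fin n) (o : Ω i) (x : X i) (xp : Option (X i)),
        (∑ a : A i, occAMM T μ0 Obs γ π Tx i o a x xp)
          = ∑ a : A i, occAMM T μ0 Obs γ π' Tx' i o a x xp))
      ↔
      (∀ (i : Fin n) (o : Ω i) (a : A i) (x : X i) (xp : Option (X i)),
        occAMM T μ0 Obs γ π Tx i o a x xp = occAMM T μ0 Obs γ π' Tx' i o a x xp)) ∧
    ((∀ (i : Fin n) (o : Ω i) (a : A i) (x : X i) (xp : Option (X i)),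
        occAMM T μ0 Obs γ π Tx i o a x xp = occAMM T μ0 Obs γ π' Tx' i o a x xp) →
      (∀ i : Fin n, π i = π' i ∧ Tx i = Tx' i)) := by
  have hfac := occ_factor T μ0 Obs γ π Tx hπ_sum hTx_sum
  have hfac' := occ_factor T μ0 Obs γ π' Tx' hπ'_sum hTx'_sum
  -- marginals: ∑ a
  have hMa : ∀ (i : Fin n) (o : Ω i) (x : X i) (xp : Option (X i)),
      (∑ a : A i, occAMM T μ0 Obs γ π Tx i o a x xp)
        = Tx i o xp x * wgt T μ0 Obs γ π Tx i o xp := by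
    intro i o x xp
    simp only [hfac]
    rw [← Finset.sum_mul, ← Finset.sum_mul, hπ_sum i o x, one_mul]
  have hMa' : ∀ (i : Fin n) (o : Ω i) (x : X i) (xp : Option (X i)),
      (∑ a : A i, occAMM T μ0 Obs γ π' Tx' i o a x xp)
        = Tx' i o xp x * wgt T μ0 Obs γ π' Tx' i o xp := by
    intro i o x xp
    simp only [hfac']
    rw [← Finset.sum_mul, ← Finset.sum_mul, hπ'_sum i o x, one_mul]
  -- marginals: ∑ xp
  have hMxp : ∀ (i : Fin n) (o : Ω i) (a : A i) (x : X i),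
      (∑ xp : Option (X i), occAMM T μ0 Obs γ π Tx i o a x xp)
        = π i o x a * ∑ xp : Option (X i), Tx i o xp x * wgt T μ0 Obs γ π Tx i o xp := by
    intro i o a x
    simp only [hfac, mul_assoc]
    rw [← Finset.mul_sum]
  have hMxp' : ∀ (i : Fin n) (o : Ω i) (a : A i) (x : X i),
      (∑ xp : Option (X i), occAMM T μ0 Obs γ π' Tx' i o a x xp)
        = π' i o x a * ∑ xp : Option (X i), Tx' i o xp x * wgt T μ0 Obs γ π' Tx' i o xp := by
    intro i o a x
    simp only [hfac', mul_assoc]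
    rw [← Finset.mul_sum]
  -- double marginals
  have hW : ∀ (i : Fin n) (o : Ω i) (xp : Option (X i)),
      (∑ a : A i, ∑ x : X i, occAMM T μ0 Obs γ π Tx i o a x xp)
        = wgt T μ0 Obs γ π Tx i o xp := by
    intro i o xp
    rw [Finset.sum_comm]
    calc (∑ x : X i, ∑ a : A i, occAMM T μ0 Obs γ π Tx i o a x xp)
        = ∑ x : X i, Tx i o xp x * wgt T μ0 Obs γ π Tx i o xp :=
          Finset.sum_congr rfl fun x _ => hMa i o x xp
      _ = (∑ x : X i, Tx i o xp x) * wgt T μ0 Obs γ π Tx i o xp := by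
          rw [Finset.sum_mul]
      _ = wgt T μ0 Obs γ π Tx i o xp := by rw [hTx_sum i o xp, one_mul]
  have hW' : ∀ (i : Fin n) (o : Ω i) (xp : Option (X i)),
      (∑ a : A i, ∑ x : X i, occAMM T μ0 Obs γ π' Tx' i o a x xp)
        = wgt T μ0 Obs γ π' Tx' i o xp := by
    intro i o xp
    rw [Finset.sum_comm]
    calc (∑ x : X i, ∑ a : A i, occAMM T μ0 Obs γ π' Tx' i o a x xp)
        = ∑ x : X i, Tx' i o xp x * wgt T μ0 Obs γ π' Tx' i o xp :=
          Finset.sum_congr rfl fun x _ => hMa' i o x xp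
      _ = (∑ x : X i, Tx' i o xp x) * wgt T μ0 Obs γ π' Tx' i o xp := by
          rw [Finset.sum_mul]
      _ = wgt T μ0 Obs γ π' Tx' i o xp := by rw [hTx'_sum i o xp, one_mul]
  have hV : ∀ (i : Fin n) (o : Ω i) (x : X i),
      (∑ a : A i, ∑ xp : Option (X i), occAMM T μ0 Obs γ π Tx i o a x xp)
        = ∑ xp : Option (X i), Tx i o xp x * wgt T μ0 Obs γ π Tx i o xp := by
    intro i o x
    rw [Finset.sum_comm]
    exact Finset.sum_congr rfl fun xp _ => hMa i o x xp
  have hV' : ∀ (i : Fin n) (o : Ω i) (x : X i),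
      (∑ a : A i, ∑ xp : Option (X i), occAMM T μ0 Obs γ π' Tx' i o a x xp)
        = ∑ xp : Option (X i), Tx' i o xp x * wgt T μ0 Obs γ π' Tx' i o xp := by
    intro i o x
    rw [Finset.sum_comm]
    exact Finset.sum_congr rfl fun xp _ => hMa' i o x xp
  -- positivity of the marginals
  have hposW : ∀ (i : Fin n) (o : Ω i) (xp : Option (X i)),
      0 < wgt T μ0 Obs γ π Tx i o xp := fun i o xp => (hW i o xp) ▸ hpos_oxp i o xp
  have hposW' : ∀ (i : Fin n) (o : Ω i) (xp : Option (X i)),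
      0 < wgt T μ0 Obs γ π' Tx' i o xp := fun i o xp => (hW' i o xp) ▸ hpos'_oxp i o xp
  have hposV : ∀ (i : Fin n) (o : Ω i) (x : X i),
      0 < ∑ xp : Option (X i), Tx i o xp x * wgt T μ0 Obs γ π Tx i o xp :=
    fun i o x => (hV i o x) ▸ hpos_ox i o x
  -- key step: matching marginals determine everything
  have key : (∀ (i : Fin n) (o : Ω i) (a : A i) (x : X i),
        (∑ xp : Option (X i), occAMM T μ0 Obs γ π Tx i o a x xp)
          = ∑ xp : Option (X i), occAMM T μ0 Obs γ π' Tx' i o a x xp) →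
      (∀ (i : Fin n) (o : Ω i) (x : X i) (xp : Option (X i)),
        (∑ a : A i, occAMM T μ0 Obs γ π Tx i o a x xp)
          = ∑ a : A i, occAMM T μ0 Obs γ π' Tx' i o a x xp) →
      (∀ i : Fin n, π i = π' i) ∧ (∀ i : Fin n, Tx i = Tx' i) ∧
      (∀ (i : Fin n) (o : Ω i) (a : A i) (x : X i) (xp : Option (X i)),
        occAMM T μ0 Obs γ π Tx i o a x xp = occAMM T μ0 Obs γ π' Tx' i o a x xp) := by
    intro h1 h2
    have hWW : ∀ (i : Fin n) (o : Ω i) (xp : Option (X i)),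
        wgt T μ0 Obs γ π Tx i o xp = wgt T μ0 Obs γ π' Tx' i o xp := by
      intro i o xp
      rw [← hW i o xp, ← hW' i o xp, Finset.sum_comm, Finset.sum_comm (γ := A i)]
      exact Finset.sum_congr rfl fun x _ => h2 i o x xp
    have hTxeq : ∀ i : Fin n, Tx i = Tx' i := by
      intro i; funext o xp x
      have h := h2 i o x xp
      rw [hMa i o x xp, hMa' i o x xp, ← hWW i o xp] at h
      exact mul_right_cancel₀ (ne_of_gt (hposW i o xp)) h
    have hVV : ∀ (i : Fin n) (o : Ω i) (x : X i),
        (∑ xp : Option (X i), Tx i o xp x * wgt T μ0 Obs γ π Tx i o xp)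
          = ∑ xp : Option (X i), Tx' i o xp x * wgt T μ0 Obs γ π' Tx' i o xp := by
      intro i o x
      rw [← hV i o x, ← hV' i o x]
      exact Finset.sum_congr rfl fun a _ => h1 i o a x
    have hπeq : ∀ i : Fin n, π i = π' i := by
      intro i; funext o x a
      have h := h1 i o a x
      rw [hMxp i o a x, hMxp' i o a x, ← hVV i o x] at h
      exact mul_right_cancel₀ (ne_of_gt (hposV i o x)) h
    refine ⟨hπeq, hTxeq, fun i o a x xp => ?_⟩
    rw [hfac i o a x xp, hfac' i o a x xp, hπeq i, hTxeq i, hWW i o xp]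
  constructor
  · constructor
    · rintro ⟨h1, h2⟩
      exact (key h1 h2).2.2
    · intro h
      exact ⟨fun i o a x => Finset.sum_congr rfl fun xp _ => h i o a x xp,
        fun i o x xp => Finset.sum_congr rfl fun a _ => h i o a x xp⟩
  · intro h i
    have h1 : ∀ (i : Fin n) (o : Ω i) (a : A i) (x : X i),
        (∑ xp : Option (X i), occAMM T μ0 Obs γ π Tx i o a x xp)
          = ∑ xp : Option (X i), occAMM T μ0 Obs γ π' Tx' i o a x xp :=
      fun i o a x => Finset.sum_congr rfl fun xp _ => h i o a x xp
    have h2 : ∀ (i : Fin n) (o : Ω i) (x : X i) (xp : Option (X i)),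
        (∑ a : A i, occAMM T μ0 Obs γ π Tx i o a x xp)
          = ∑ a : A i, occAMM T μ0 Obs γ π' Tx' i o a x xp :=
      fun i o x xp => Finset.sum_congr rfl fun a _ => h i o a x xp
    exact ⟨(key h1 h2).1 i, (key h1 h2).2.1 i⟩


end DecPOMDP
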